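/- Let S be a perfect Hausdorff topology on ℕ forming part of a Mammen space (ℕ, S, C), and for n ∈ ℕ define A_n = {A ⊆ ℕ : for all V ∈ S, n ∈ V implies V ∩ A is infinite}. Then every subset A of ℕ satisfies A ∈ A_n or (ℕ \ A) ∈ A_n. -/

import Mathlib

open Set Topology TopologicalSpace

/-- A topology is perfect if every nonempty open set is infinite. -/
def IsPerfectTop {U : Type*} (T : TopologicalSpace U) : Prop :=
  ∀ V : Set U, IsOpen[T] V → V.Nonempty → V.Infinite

/-- A perfect topology is maximal if no strictly finer topology is perfect. -/
def IsMaxPerfectTop {U : Type*} (T : TopologicalSpace U) : Prop :=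
  IsPerfectTop T ∧ ∀ T' : TopologicalSpace U, T' ≤ T → IsPerfectTop T' → T' = T

/-- `(U, T, C)` is a Mammen space. -/
structure IsMammen {U : Type*} (T : TopologicalSpace U) (C : Set (Set U)) : Prop where
  nonemptyU : Nonempty U
  perfect : IsPerfectTop T
  hausdorff : @T2Space U T
  exNonempty : ∃ c ∈ C, c.Nonempty
  unionMem : ∀ c ∈ C, ∀ d ∈ C, c ∪ d ∈ C
  interMem : ∀ c ∈ C, ∀ d ∈ C, c ∩ d ∈ C
  singletonMem : ∀ c ∈ C, c.Nonempty → ∃ x ∈ c, ({x} : Set U) ∈ C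
  emptyMem : ∅ ∈ C
  openInterC : ∀ s ∈ C, IsOpen[T] s → s = ∅
  interOpenMem : ∀ c ∈ C, ∀ s : Set U, IsOpen[T] s → c ∩ s ∈ C

/-- A Mammen space is complete if every subset is the union of an open set
and a choice category. -/
def MammenComplete {U : Type*} (T : TopologicalSpace U) (C : Set (Set U)) : Prop :=
  ∀ X : Set U, ∃ s c, IsOpen[T] s ∧ c ∈ C ∧ X = s ∪ c


theorem stmt17 (T : TopologicalSpace ℕ) (C : Set (Set ℕ))
    (h : IsMammen T C) (n : ℕ) (A : Set ℕ) :
    (∀ V : Set ℕ, IsOpen[T] V → n ∈ V → (V ∩ A).Infinite) ∨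
    (∀ V : Set ℕ, IsOpen[T] V → n ∈ V → (V ∩ Aᶜ).Infinite) := by
  by_contra hc
  push_neg at hc
  obtain ⟨⟨V, hV, hnV, hVA⟩, ⟨W, hW, hnW, hWA⟩⟩ := hc
  have hopen : IsOpen[T] (V ∩ W) := IsOpen.inter hV hW
  have hinf : (V ∩ W).Infinite := h.perfect _ hopen ⟨n, hnV, hnW⟩
  have : (V ∩ W) ⊆ (V ∩ A) ∪ (W ∩ Aᶜ) := by
    intro x ⟨hxV, hxW⟩
    by_cases hxA : x ∈ A
    · exact Or.inl ⟨hxV, hxA⟩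
    · exact Or.inr ⟨hxW, hxA⟩
  exact hinf (Set.Finite.subset (hVA.union hWA) this)
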